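/- Monotonicity of layer depth: if Q ⊆ P are finite planar point sets and p ∈ Q, then the convex-layer depth of p with respect to Q is at most its depth with respect to P. -/

import Mathlib

/- The extreme points (convex hull vertices) of a finite planar point set. -/
open Classical in
noncomputable def extremePts (S : Finset (ℝ × ℝ)) : Finset (ℝ × ℝ) :=
  S.filter fun x => x ∉ convexHull ℝ ((S.erase x : Finset (ℝ × ℝ)) : Set (ℝ × ℝ))

/- `peel P i` is the set of points remaining after `i` rounds of removing extreme points. -/
noncomputable def peel (P : Finset (ℝ × ℝ)) : ℕ → Finset (ℝ × ℝ)
  | 0 => P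
  | i + 1 => peel P i \ extremePts (peel P i)

/- The `i`-th convex layer (0-indexed): the extreme points of what remains at stage `i`. -/
noncomputable def layer (P : Finset (ℝ × ℝ)) (i : ℕ) : Finset (ℝ × ℝ) :=
  extremePts (peel P i)

/- The convex-layer depth of `p` in `S`: the (unique) stage `i` at which `p` is peeled
off, i.e. the least `i` with `p` an extreme point of `peel S i`. -/
noncomputable def depth (S : Finset (ℝ × ℝ)) (p : ℝ × ℝ) : ℕ :=
  sInf {i : ℕ | p ∈ extremePts (peel S i)}

lemma mem_extremePts {S : Finset (ℝ × ℝ)} {x : ℝ × ℝ} :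
    x ∈ extremePts S ↔ x ∈ S ∧ x ∉ convexHull ℝ ((S.erase x : Finset (ℝ × ℝ)) : Set (ℝ × ℝ)) := by
  classical simp [extremePts]

/-- If `x ∈ S ⊆ T` and `x` is extreme in `T`, then `x` is extreme in `S`. -/
lemma extremePts_anti {S T : Finset (ℝ × ℝ)} (hST : S ⊆ T) {x : ℝ × ℝ}
    (hxS : x ∈ S) (hx : x ∈ extremePts T) : x ∈ extremePts S := by
  rw [mem_extremePts] at hx ⊢
  refine ⟨hxS, fun h => hx.2 ?_⟩
  refine convexHull_mono ?_ h
  exact_mod_cast Finset.erase_subset_erase x hST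

/-- Peeling is monotone in the set. -/
lemma peel_mono {Q P : Finset (ℝ × ℝ)} (hQP : Q ⊆ P) : ∀ i, peel Q i ⊆ peel P i := by
  intro i
  induction i with
  | zero => exact hQP
  | succ i ih =>
      intro x hx
      rw [peel, Finset.mem_sdiff] at hx ⊢
      exact ⟨ih hx.1, fun h => hx.2 (extremePts_anti ih hx.1 h)⟩

/-- `extremePts` of a nonempty finset is nonempty. -/
lemma extremePts_nonempty {S : Finset (ℝ × ℝ)} (hS : S.Nonempty) : (extremePts S).Nonempty := by
  have hc : IsCompact (convexHull ℝ (S : Set (ℝ × ℝ))) :=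
    S.finite_toSet.isCompact_convexHull (𝕜 := ℝ)
  obtain ⟨x, hx⟩ := hc.extremePoints_nonempty
    ((convexHull_nonempty_iff (𝕜 := ℝ)).2 (by exact_mod_cast hS))
  have hxS : x ∈ (S : Set (ℝ × ℝ)) := extremePoints_convexHull_subset hx
  refine ⟨x, mem_extremePts.2 ⟨hxS, ?_⟩⟩
  intro hmem
  have := (convex_convexHull ℝ
    (S : Set (ℝ × ℝ))).mem_extremePoints_iff_mem_diff_convexHull_diff.1 hx
  apply this.2
  refine convexHull_mono ?_ hmem
  intro y hy
  simp only [Finset.coe_erase, Set.mem_diff, Set.mem_singleton_iff] at hy ⊢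
  exact ⟨subset_convexHull ℝ _ hy.1, hy.2⟩

lemma peel_peel (S : Finset (ℝ × ℝ)) (i : ℕ) :
    peel (peel S 1) i = peel S (i + 1) := by
  induction i with
  | zero => rfl
  | succ i ih => rw [peel, ih]; rfl

/-- Every point of `S` is eventually extreme in some peel. -/
lemma exists_mem_extremePts_peel (S : Finset (ℝ × ℝ)) (p : ℝ × ℝ) (hp : p ∈ S) :
    ∃ i, p ∈ extremePts (peel S i) := by
  obtain ⟨n, hn⟩ : ∃ n, S.card = n := ⟨S.card, rfl⟩
  induction n using Nat.strong_induction_on generalizing S with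
  | _ n ih =>
    by_cases hpe : p ∈ extremePts S
    · exact ⟨0, hpe⟩
    · have hne : S.Nonempty := ⟨p, hp⟩
      obtain ⟨q, hq⟩ := extremePts_nonempty hne
      have hqS : q ∈ S := (mem_extremePts.1 hq).1
      have hsub : peel S 1 ⊆ S := by
        intro x hx
        exact (Finset.mem_sdiff.1 hx).1
      have hcard : (peel S 1).card < n := by
        rw [← hn]
        refine Finset.card_lt_card ⟨hsub, fun h => ?_⟩
        have := Finset.mem_sdiff.1 (h hqS)
        exact this.2 hq
      have hp1 : p ∈ peel S 1 := Finset.mem_sdiff.2 ⟨hp, hpe⟩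
      obtain ⟨i, hi⟩ := ih (peel S 1).card hcard (peel S 1) hp1 rfl
      exact ⟨i + 1, by rwa [peel_peel] at hi⟩

/-- If `p ∈ S` is not extreme at any stage `< k`, then `p` survives to stage `k`. -/
lemma mem_peel_of_not_extreme {S : Finset (ℝ × ℝ)} {p : ℝ × ℝ} (hp : p ∈ S) :
    ∀ k, (∀ j < k, p ∉ extremePts (peel S j)) → p ∈ peel S k := by
  intro k
  induction k with
  | zero => exact fun _ => hp
  | succ k ih =>
      intro h
      rw [peel, Finset.mem_sdiff]
      have hk : p ∈ peel S k := ih fun j hj => h j (Nat.lt_succ_of_lt hj)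
      exact ⟨hk, h k (Nat.lt_succ_self k)⟩

/- STATEMENT 18: depth is monotone under taking subsets: for `Q ⊆ P` and `p ∈ Q`,
`depth Q p ≤ depth P p`. -/
theorem depth_mono (P Q : Finset (ℝ × ℝ)) (hQP : Q ⊆ P) (p : ℝ × ℝ) (hp : p ∈ Q) :
    depth Q p ≤ depth P p := by
  have hPne : {i : ℕ | p ∈ extremePts (peel P i)}.Nonempty :=
    exists_mem_extremePts_peel P p (hQP hp)
  have hiP : p ∈ extremePts (peel P (depth P p)) := Nat.sInf_mem hPne
  by_contra h
  push_neg at h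
  -- p is not extreme in any peel Q j for j ≤ depth P p
  have hnot : ∀ j < depth P p + 1, p ∉ extremePts (peel Q j) := by
    intro j hj hmem
    have : depth Q p ≤ j := Nat.sInf_le hmem
    omega
  have hmem : p ∈ peel Q (depth P p + 1) := mem_peel_of_not_extreme hp _ hnot
  have := peel_mono hQP (depth P p + 1) hmem
  rw [peel, Finset.mem_sdiff] at this
  exact this.2 hiP
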